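/- Let A, B be nonempty subsets of a normed space X and T a p-cyclic φ-contraction mapping. For (x₀,y₀) ∈ A × B define x_n = T(x_{n-1}, y_{n-1}) and y_n = T(y_{n-1}, x_{n-1}). Then the sequence of distances ‖(x_{n+1}, y_{n+1}) − (x_n, y_n)‖ is nonincreasing in n. -/
import Mathlib


open Filter Topology

/-- `setDist A B = inf {‖a - b‖ : a ∈ A, b ∈ B}`. -/
noncomputable def setDist {X : Type*} [NormedAddCommGroup X] (A B : Set X) : ℝ :=
  sInf {d : ℝ | ∃ a ∈ A, ∃ b ∈ B, d = ‖a - b‖}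

lemma setDist_nonneg' {X : Type*} [NormedAddCommGroup X] {A B : Set X} :
    0 ≤ setDist A B := by
  apply Real.sInf_nonneg
  rintro d ⟨a, _, b, _, rfl⟩
  exact norm_nonneg _

lemma setDist_le' {X : Type*} [NormedAddCommGroup X] {A B : Set X}
    {a b : X} (ha : a ∈ A) (hb : b ∈ B) : setDist A B ≤ ‖a - b‖ := by
  apply csInf_le
  · exact ⟨0, by rintro d ⟨a, _, b, _, rfl⟩; exact norm_nonneg _⟩
  · exact ⟨a, ha, b, hb, rfl⟩

lemma step_aux {X : Type*} [NormedAddCommGroup X]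
    (A B : Set X)
    (T : X → X → X) (φ : ℝ → ℝ)
    (hφmono : StrictMonoOn φ (Set.Ici 0))
    (hT : ∀ x₁ ∈ A, ∀ y₁ ∈ B, ∀ x₂ ∈ B, ∀ y₂ ∈ A,
      ‖T x₁ y₁ - T x₂ y₂‖ ≤ ‖((x₁, y₁) : X × X) - (x₂, y₂)‖
        - φ ‖((x₁, y₁) : X × X) - (x₂, y₂)‖ + φ (setDist A B))
    {u v u' v' : X} (hu : u ∈ A) (hv : v ∈ B) (hu' : u' ∈ B) (hv' : v' ∈ A) :
    max ‖T u' v' - T u v‖ ‖T v' u' - T v u‖ ≤ max ‖u' - u‖ ‖v' - v‖ := by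
  set D : ℝ := max ‖u' - u‖ ‖v' - v‖ with hD
  have hD0 : 0 ≤ D := le_trans (norm_nonneg _) (le_max_left _ _)
  have hdle : setDist A B ≤ D := by
    calc setDist A B ≤ ‖u - u'‖ := setDist_le' hu hu'
    _ = ‖u' - u‖ := norm_sub_rev _ _
    _ ≤ D := le_max_left _ _
  have hφle : φ (setDist A B) ≤ φ D :=
    hφmono.monotoneOn setDist_nonneg' hD0 hdle
  have h1 : ‖T u' v' - T u v‖ ≤ D := by
    have h := hT u hu v hv u' hu' v' hv'
    have hn : ‖((u, v) : X × X) - (u', v')‖ = D := by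
      simp only [Prod.norm_def, Prod.fst_sub, Prod.snd_sub]
      rw [norm_sub_rev u u', norm_sub_rev v v']
    rw [hn] at h
    calc ‖T u' v' - T u v‖ = ‖T u v - T u' v'‖ := norm_sub_rev _ _
    _ ≤ D - φ D + φ (setDist A B) := h
    _ ≤ D - φ D + φ D := by linarith
    _ = D := by ring
  have h2 : ‖T v' u' - T v u‖ ≤ D := by
    have h := hT v' hv' u' hu' v hv u hu
    have hn : ‖((v', u') : X × X) - (v, u)‖ = D := by
      simp only [Prod.norm_def, Prod.fst_sub, Prod.snd_sub]
      rw [max_comm]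
    rw [hn] at h
    calc ‖T v' u' - T v u‖ ≤ D - φ D + φ (setDist A B) := h
    _ ≤ D - φ D + φ D := by linarith
    _ = D := by ring
  exact max_le h1 h2

theorem stmt2 {X : Type*} [NormedAddCommGroup X] [NormedSpace ℝ X]
    (A B : Set X) (hA : A.Nonempty) (hB : B.Nonempty)
    (T : X → X → X) (φ : ℝ → ℝ)
    (hφmono : StrictMonoOn φ (Set.Ici 0)) (hφpos : ∀ t ≥ (0:ℝ), 0 ≤ φ t)
    (hTB : ∀ x ∈ A, ∀ y ∈ B, T x y ∈ B)
    (hTA : ∀ x ∈ B, ∀ y ∈ A, T x y ∈ A)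
    (hT : ∀ x₁ ∈ A, ∀ y₁ ∈ B, ∀ x₂ ∈ B, ∀ y₂ ∈ A,
      ‖T x₁ y₁ - T x₂ y₂‖ ≤ ‖((x₁, y₁) : X × X) - (x₂, y₂)‖
        - φ ‖((x₁, y₁) : X × X) - (x₂, y₂)‖ + φ (setDist A B))
    (x y : ℕ → X) (hx0 : x 0 ∈ A) (hy0 : y 0 ∈ B)
    (hx : ∀ n, x (n + 1) = T (x n) (y n))
    (hy : ∀ n, y (n + 1) = T (y n) (x n)) :
    Antitone (fun n : ℕ => ‖((x (n + 1), y (n + 1)) : X × X) - (x n, y n)‖) := by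
  have hmem : ∀ n, (x n ∈ A ∧ y n ∈ B) ∨ (x n ∈ B ∧ y n ∈ A) := by
    intro n
    induction n with
    | zero => exact Or.inl ⟨hx0, hy0⟩
    | succ n ih =>
      rcases ih with ⟨ha, hb⟩ | ⟨hb, ha⟩
      · exact Or.inr ⟨hx n ▸ hTB _ ha _ hb, hy n ▸ hTA _ hb _ ha⟩
      · exact Or.inl ⟨hx n ▸ hTA _ hb _ ha, hy n ▸ hTB _ ha _ hb⟩
  apply antitone_nat_of_succ_le
  intro n
  simp only [Prod.norm_def, Prod.fst_sub, Prod.snd_sub]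
  rw [hx (n + 1), hy (n + 1), hx n, hy n]
  rcases hmem n with ⟨ha, hb⟩ | ⟨hb, ha⟩
  · exact step_aux A B T φ hφmono hT ha hb (hTB _ ha _ hb) (hTA _ hb _ ha)
  · have h := step_aux A B T φ hφmono hT ha hb (hTB _ ha _ hb) (hTA _ hb _ ha)
    exact (max_comm _ _).trans_le (h.trans_eq (max_comm _ _))
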